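/- arXiv:1403.4324 — 3 statements merged into one kernel-verified Lean document; each statement's English description precedes it below -/
import Mathlib

section
/- Let n ≥ 1, let Λ = Δ(n) be the 2-graph T_2 ×_1 ℤ/nℤ, let θ ∈ ℝ and let c = d_*c_θ be the induced 𝕋-valued 2-cocycle on Λ. Let s be a Cuntz–Krieger (Λ,c)-family in a C*-algebra B, let μ_i, ν_i, α_i, U and V be as follows: μ_i := (a^n b^0, i), ν_i := (a^{n−1} b^1, i), α_0, …, α_{n−1} ∈ 𝕋 with α_i = e^{2πiθ} α_{i−1} for 1 ≤ i ≤ n−1, U := Σ_{i∈ℤ/nℤ} s_{μ_i}, V := Σ_{i∈ℤ/nℤ} α_i s_{ν_i}, and write (a,j) := (a^1 b^0, j). Then U and V commute with s_{(a,j)} and with s_{(a,j)}* for all 0 ≤ j ≤ n−2, and the C*-subalgebra of B generated by {s_λ : λ ∈ Λ} equals the C*-subalgebra of B generated by {U, V} ∪ {s_{(a,j)} : 0 ≤ j ≤ n−2}. -/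
open scoped BigOperators NNReal ENNReal

/-- A `k`-graph: a countable small category presented on its set of morphisms,
with a range map, a source map, a (total, junk-valued on non-composable pairs)
composition, and a degree functor into `ℕ^k` satisfying the factorisation
property. -/
structure KGraph (k : ℕ) where
  M : Type
  countableM : Countable M
  nonemptyM : Nonempty M
  src : M → M
  rng : M → M
  comp : M → M → M
  deg : M → Fin k → ℕ
  src_src : ∀ x, src (src x) = src x
  rng_src : ∀ x, rng (src x) = src x
  src_rng : ∀ x, src (rng x) = rng x
  rng_rng : ∀ x, rng (rng x) = rng x
  comp_id : ∀ x, comp x (src x) = x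
  id_comp : ∀ x, comp (rng x) x = x
  src_comp : ∀ x y, src x = rng y → src (comp x y) = src y
  rng_comp : ∀ x y, src x = rng y → rng (comp x y) = rng x
  comp_assoc : ∀ x y z, src x = rng y → src y = rng z →
    comp (comp x y) z = comp x (comp y z)
  deg_src : ∀ x, deg (src x) = 0
  deg_rng : ∀ x, deg (rng x) = 0
  deg_comp : ∀ x y, src x = rng y → deg (comp x y) = deg x + deg y
  factor : ∀ (x : M) (m n : Fin k → ℕ), deg x = m + n →
    ∃! p : M × M, src p.1 = rng p.2 ∧ comp p.1 p.2 = x ∧ deg p.1 = m ∧ deg p.2 = n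

namespace KGraph

variable {k : ℕ} (Λ : KGraph k)

/-- The vertices (identity morphisms) of a `k`-graph. -/
def IsVertex (v : Λ.M) : Prop := Λ.rng v = v

/-- `Composable x y` means the composition `x ∘ y` (i.e. the path `xy`) is defined. -/
def Composable (x y : Λ.M) : Prop := Λ.src x = Λ.rng y

/-- The type of vertices of `Λ`. -/
def Vtx := {v : Λ.M // Λ.IsVertex v}

theorem isVertex_src (x : Λ.M) : Λ.IsVertex (Λ.src x) := Λ.rng_src x

theorem isVertex_rng (x : Λ.M) : Λ.IsVertex (Λ.rng x) := Λ.rng_rng x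

/-- The source of a morphism, as a vertex. -/
def srcV (x : Λ.M) : Λ.Vtx := ⟨Λ.src x, Λ.isVertex_src x⟩

/-- The set `vΛ^{≤ n}`. -/
def leSet (v : Λ.M) (n : Fin k → ℕ) : Set Λ.M :=
  {x | Λ.rng x = v ∧ Λ.deg x ≤ n ∧
    ∀ i : Fin k, Λ.deg x + Pi.single i 1 ≤ n →
      ¬∃ y, Λ.rng y = Λ.src x ∧ Λ.deg y = Pi.single i 1}

/-- A `k`-graph is row-finite if `vΛ^n` is finite for every vertex `v` and `n ∈ ℕ^k`. -/
def RowFinite : Prop :=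
  ∀ (v : Λ.M) (n : Fin k → ℕ), Λ.IsVertex v → {x | Λ.rng x = v ∧ Λ.deg x = n}.Finite

/-- A `k`-graph is locally convex if whenever `i < j`, `e ∈ Λ^{e_i}`, `f ∈ Λ^{e_j}` and
`r e = r f`, both `e` and `f` extend to paths of degree `e_i + e_j`. -/
def LocallyConvex : Prop :=
  ∀ (i j : Fin k), i < j → ∀ e f : Λ.M,
    Λ.deg e = Pi.single i 1 → Λ.deg f = Pi.single j 1 → Λ.rng e = Λ.rng f →
    (∃ e', Λ.Composable e e' ∧ Λ.deg e' = Pi.single j 1) ∧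
    (∃ f', Λ.Composable f f' ∧ Λ.deg f' = Pi.single i 1)

/-- `Λ^{min}(x,y)`: the pairs `(α, β)` with `xα = yβ` of degree `d x ⊔ d y`. -/
def MinExt (x y : Λ.M) : Set (Λ.M × Λ.M) :=
  {p | Λ.Composable x p.1 ∧ Λ.Composable y p.2 ∧
    Λ.comp x p.1 = Λ.comp y p.2 ∧ Λ.deg (Λ.comp x p.1) = Λ.deg x ⊔ Λ.deg y}

/-- A subset `E ⊆ vΛ` is exhaustive if every `x ∈ vΛ` has a minimal common extension
with some element of `E`. -/
def Exhaustive (v : Λ.M) (E : Set Λ.M) : Prop :=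
  ∀ x, Λ.rng x = v → ∃ μ ∈ E, (Λ.MinExt x μ).Nonempty

/-- A graph trace on `Λ`. -/
def IsGraphTrace (g : Λ.Vtx → ℝ≥0) : Prop :=
  ∀ (v : Λ.Vtx) (n : Fin k → ℕ), g v = ∑ᶠ x ∈ Λ.leSet v.1 n, g (Λ.srcV x)

/-- A `𝕋`-valued `2`-cocycle on `Λ`, presented as a `ℂ`-valued function that is
unimodular on composable pairs. -/
def IsTCocycle (c : Λ.M → Λ.M → ℂ) : Prop :=
  (∀ x y, Λ.Composable x y → ‖c x y‖ = 1) ∧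
  (∀ x y, Λ.IsVertex x ∨ Λ.IsVertex y → c x y = 1) ∧
  (∀ x y z, Λ.Composable x y → Λ.Composable y z →
    c x y * c (Λ.comp x y) z = c y z * c x (Λ.comp y z))

/-- A Cuntz–Krieger `(Λ, c)`-family in a `C*`-algebra `B`: relations (CK1)–(CK4). -/
def IsCKFamily {B : Type*} [NonUnitalCStarAlgebra B] [NormedSpace ℂ B]
    (c : Λ.M → Λ.M → ℂ) (s : Λ.M → B) : Prop :=
  (∀ v, Λ.IsVertex v → star (s v) = s v ∧ s v * s v = s v) ∧
  (∀ v w, Λ.IsVertex v → Λ.IsVertex w → v ≠ w → s v * s w = 0) ∧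
  (∀ x y, Λ.Composable x y → s x * s y = c x y • s (Λ.comp x y)) ∧
  (∀ x, star (s x) * s x = s (Λ.src x)) ∧
  (∀ (v : Λ.M) (n : Fin k → ℕ), Λ.IsVertex v →
    s v = ∑ᶠ x ∈ Λ.leSet v n, s x * star (s x))

end KGraph
/-- The `2`-graph `Δ(n) = T₂ ×₁ ℤ/nℤ`: morphisms are pairs `((s,t), i)` with degree
`(s,t)`, range `i`, source `i + s + t`, and composition
`((s,t), i)((s',t'), i+s+t) = ((s+s',t+t'), i)`. -/
def Delta (n : ℕ) : KGraph 2 where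
  M := (ℕ × ℕ) × ZMod n
  countableM := by
    cases n with
    | zero => exact inferInstanceAs (Countable ((ℕ × ℕ) × ℤ))
    | succ m => exact inferInstanceAs (Countable ((ℕ × ℕ) × Fin (m + 1)))
  nonemptyM := by infer_instance
  src x := ((0, 0), x.2 + x.1.1 + x.1.2)
  rng x := ((0, 0), x.2)
  comp x y := ((x.1.1 + y.1.1, x.1.2 + y.1.2), x.2)
  deg x := ![x.1.1, x.1.2]
  src_src x := by simp
  rng_src x := by simp
  src_rng x := by simp
  rng_rng x := by simp
  comp_id x := by simp
  id_comp x := by simp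
  src_comp x y h := by
    have h2 : x.2 + (x.1.1 : ZMod n) + (x.1.2 : ZMod n) = y.2 :=
      congrArg Prod.snd h
    refine Prod.ext rfl ?_
    push_cast
    rw [← h2]
    ring
  rng_comp x y h := rfl
  comp_assoc x y z h1 h2 := by
    refine Prod.ext (Prod.ext ?_ ?_) rfl <;> simp [Nat.add_assoc]
  deg_src x := by
    funext i
    fin_cases i <;> rfl
  deg_rng x := by
    funext i
    fin_cases i <;> rfl
  deg_comp x y h := by
    funext i
    fin_cases i <;> simp
  factor x m m' h := by
    refine ⟨(((m 0, m 1), x.2), ((m' 0, m' 1), x.2 + m 0 + m 1)), ⟨rfl, ?_, ?_, ?_⟩, ?_⟩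
    · have h0 : x.1.1 = m 0 + m' 0 := by
        have := congrFun h 0; simpa using this
      have h1 : x.1.2 = m 1 + m' 1 := by
        have := congrFun h 1; simpa using this
      refine Prod.ext (Prod.ext ?_ ?_) rfl <;> simp [h0, h1]
    · funext i; fin_cases i <;> rfl
    · funext i; fin_cases i <;> rfl
    · rintro ⟨a, b⟩ ⟨hcomp, heq, hda, hdb⟩
      have ha0 : a.1.1 = m 0 := by
        have := congrFun hda 0; simpa using this
      have ha1 : a.1.2 = m 1 := by
        have := congrFun hda 1; simpa using this
      have hb0 : b.1.1 = m' 0 := by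
        have := congrFun hdb 0; simpa using this
      have hb1 : b.1.2 = m' 1 := by
        have := congrFun hdb 1; simpa using this
      have ha2 : a.2 = x.2 := congrArg (fun z => z.2) heq
      have hb2 : b.2 = x.2 + (m 0 : ZMod n) + (m 1 : ZMod n) := by
        have := congrArg Prod.snd hcomp
        simp only at this
        rw [← this, ha2, ha0, ha1]
      refine Prod.ext (Prod.ext (Prod.ext ha0 ha1) ha2) (Prod.ext (Prod.ext hb0 hb1) hb2)

/-- The `𝕋`-valued `2`-cocycle `d_* c_θ` on `Δ(n)` induced by the cocycle
`c_θ(m, m') = e^{2πiθ m₂ m'₁}` on `ℤ²`. -/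
noncomputable def deltaCocycle (n : ℕ) (θ : ℝ) : (Delta n).M → (Delta n).M → ℂ :=
  fun x y => Complex.exp (2 * Real.pi * Complex.I * θ * ((x.1.2 : ℂ) * (y.1.1 : ℂ)))
set_option linter.unusedSectionVars false

section DeltaAux

open KGraph Real

variable {n : ℕ} {θ : ℝ}
variable {B : Type*} [NonUnitalCStarAlgebra B] [NormedSpace ℂ B] [StarModule ℂ B]
  [SMulCommClass ℂ B B] [IsScalarTower ℂ B B]
variable {s : (Delta n).M → B}

/-- CK2 specialized to `Delta n`. -/
theorem dLmul (hs : (Delta n).IsCKFamily (deltaCocycle n θ) s)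
    (p q p' q' : ℕ) (z z' : ZMod n) (h : z + (p : ZMod n) + (q : ZMod n) = z') :
    s ((p, q), z) * s ((p', q'), z') =
      Complex.exp (2 * Real.pi * Complex.I * θ * ((q : ℂ) * (p' : ℂ))) • s ((p + p', q + q'), z) := by
  have hcomp : (Delta n).Composable ((p, q), z) ((p', q'), z') := by
    show ((0,0), z + (p : ZMod n) + (q : ZMod n)) = ((0,0), z')
    rw [h]
  exact hs.2.2.1 _ _ hcomp

theorem dLmulA (hs : (Delta n).IsCKFamily (deltaCocycle n θ) s)
    (p p' q' : ℕ) (z z' : ZMod n) (h : z + (p : ZMod n) = z') :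
    s ((p, 0), z) * s ((p', q'), z') = s ((p + p', q'), z) := by
  rw [dLmul hs p 0 p' q' z z' (by simpa using h)]
  norm_num

theorem dLmulB (hs : (Delta n).IsCKFamily (deltaCocycle n θ) s)
    (p q q' : ℕ) (z z' : ZMod n) (h : z + (p : ZMod n) + (q : ZMod n) = z') :
    s ((p, q), z) * s ((0, q'), z') = s ((p, q + q'), z) := by
  rw [dLmul hs p q 0 q' z z' h]
  norm_num

theorem dVert (hs : (Delta n).IsCKFamily (deltaCocycle n θ) s) (z : ZMod n) :
    star (s ((0,0), z)) = s ((0,0), z) ∧ s ((0,0), z) * s ((0,0), z) = s ((0,0), z) :=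
  hs.1 _ rfl

theorem dVertOrth (hs : (Delta n).IsCKFamily (deltaCocycle n θ) s) {z w : ZMod n} (h : z ≠ w) :
    s ((0,0), z) * s ((0,0), w) = 0 :=
  hs.2.1 _ _ rfl rfl (fun hc => h (congrArg Prod.snd hc))

/-- right absorption: `s x * s (vertex at src x) = s x`. -/
theorem dAbsR (hs : (Delta n).IsCKFamily (deltaCocycle n θ) s)
    (p q : ℕ) (z z' : ZMod n) (h : z + (p : ZMod n) + (q : ZMod n) = z') :
    s ((p, q), z) * s ((0, 0), z') = s ((p, q), z) := by
  have := dLmulB hs p q 0 z z' h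
  simpa using this

/-- left absorption: `s (vertex at rng x) * s x = s x`. -/
theorem dAbsL (hs : (Delta n).IsCKFamily (deltaCocycle n θ) s)
    (p q : ℕ) (z : ZMod n) :
    s ((0, 0), z) * s ((p, q), z) = s ((p, q), z) := by
  have := dLmulA hs 0 p q z z (by simp)
  simpa using this

/-- CK3 specialized. -/
theorem dSrc (hs : (Delta n).IsCKFamily (deltaCocycle n θ) s)
    (p q : ℕ) (z z' : ZMod n) (h : z + (p : ZMod n) + (q : ZMod n) = z') :
    star (s ((p, q), z)) * s ((p, q), z) = s ((0,0), z') := by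
  have := hs.2.2.2.1 ((p,q),z)
  rw [this]
  show s ((0,0), z + (p : ZMod n) + (q : ZMod n)) = _
  rw [h]

theorem dZero (hs : (Delta n).IsCKFamily (deltaCocycle n θ) s)
    (p q p' q' : ℕ) (z z' : ZMod n) (h : z + (p : ZMod n) + (q : ZMod n) ≠ z') :
    s ((p, q), z) * s ((p', q'), z') = 0 := by
  rw [← dAbsR hs p q z (z + p + q) rfl, ← dAbsL hs p' q' z',
    mul_assoc, ← mul_assoc (s ((0,0), z + (p:ZMod n) + q)), dVertOrth hs h, zero_mul, mul_zero]

theorem dStarZero (hs : (Delta n).IsCKFamily (deltaCocycle n θ) s)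
    (p q p' q' : ℕ) (z z' : ZMod n) (h : z ≠ z') :
    star (s ((p, q), z)) * s ((p', q'), z') = 0 := by
  have h1 : star (s ((p,q), z)) = star (s ((p,q), z)) * s ((0,0), z) := by
    conv_lhs => rw [← dAbsL hs p q z]
    rw [star_mul, (dVert hs z).1]
  rw [h1, ← dAbsL hs p' q' z', mul_assoc, ← mul_assoc (s ((0,0), z)), dVertOrth hs h,
    zero_mul, mul_zero]

theorem dZeroStar (hs : (Delta n).IsCKFamily (deltaCocycle n θ) s)
    (p q p' q' : ℕ) (z z' w w' : ZMod n) (hw : z + (p : ZMod n) + (q : ZMod n) = w)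
    (hw' : z' + (p' : ZMod n) + (q' : ZMod n) = w') (h : w ≠ w') :
    s ((p, q), z) * star (s ((p', q'), z')) = 0 := by
  have h1 : star (s ((p',q'), z')) = s ((0,0), w') * star (s ((p',q'), z')) := by
    conv_lhs => rw [← dAbsR hs p' q' z' w' hw']
    rw [star_mul, (dVert hs w').1]
  rw [h1, ← dAbsR hs p q z w hw, mul_assoc, ← mul_assoc (s ((0,0), w)), dVertOrth hs h,
    zero_mul, mul_zero]

end DeltaAux

section DeltaAux2
open KGraph Real

variable {n : ℕ} {θ : ℝ}
variable {B : Type*} [NonUnitalCStarAlgebra B] [NormedSpace ℂ B] [StarModule ℂ B]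
  [SMulCommClass ℂ B B] [IsScalarTower ℂ B B]
variable {s : (Delta n).M → B}

theorem dDeg (p q : ℕ) (w : ZMod n) : (Delta n).deg ((p,q),w) = ![p,q] := rfl

theorem dDeg0 (w : ZMod n) : (Delta n).deg ((0 : ℕ × ℕ), w) = ![0,0] := rfl

theorem dLeSet (z : ZMod n) :
    (Delta n).leSet ((0,0), z) ![1, 0] = {((1, 0), z)} := by
  ext x
  obtain ⟨⟨p, q⟩, w⟩ := x
  simp only [KGraph.leSet, Set.mem_setOf_eq, Set.mem_singleton_iff]
  constructor
  · rintro ⟨hr, hd, hmin⟩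
    have hw : w = z := congrArg Prod.snd hr
    have hq : q = 0 := by
      have := hd 1
      simpa [dDeg] using this
    have hp : p ≤ 1 := by
      have := hd 0
      simpa [dDeg] using this
    subst hw hq
    rcases Nat.lt_or_ge p 1 with hp0 | hp1
    · interval_cases p
      exfalso
      apply hmin 0
      · intro i
        fin_cases i <;> simp [dDeg, dDeg0, Pi.single_apply]
      · refine ⟨((1,0), w + (0:ℕ) + (0:ℕ)), rfl, ?_⟩
        funext i
        fin_cases i <;> simp [dDeg, Pi.single_apply]
    · have hp2 : p = 1 := le_antisymm hp hp1
      rw [hp2]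
      exact rfl
  · rintro hx
    rw [hx]
    refine ⟨rfl, by intro i; fin_cases i <;> simp [dDeg], ?_⟩
    intro i hi
    exfalso
    fin_cases i
    · have := hi 0
      simp [dDeg, Pi.single_apply] at this
    · have := hi 1
      simp [dDeg, Pi.single_apply] at this

theorem dProj (hs : (Delta n).IsCKFamily (deltaCocycle n θ) s) (z : ZMod n) :
    s ((0,0), z) = s ((1,0), z) * star (s ((1,0), z)) := by
  have := hs.2.2.2.2 ((0,0), z) ![1,0] rfl
  rw [dLeSet z] at this
  exact this.trans (finsum_mem_singleton (f := fun x : (Delta n).M => s x * star (s x))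
    (a := (((1,0),z) : (Delta n).M)))

end DeltaAux2

section DeltaAux3
open KGraph Real

variable {n : ℕ} {θ : ℝ}
variable {B : Type*} [NonUnitalCStarAlgebra B] [NormedSpace ℂ B] [StarModule ℂ B]
  [SMulCommClass ℂ B B] [IsScalarTower ℂ B B]
variable {s : (Delta n).M → B}

theorem dFinEq (hn : 0 < n) {m : ℕ} (hm : m < n) {i : Fin n}
    (h : ((i : ℕ) : ZMod n) = (m : ZMod n)) : i = ⟨m, hm⟩ := by
  haveI : NeZero n := ⟨hn.ne'⟩
  apply Fin.ext
  have h1 : (((i : ℕ) : ZMod n)).val = (i : ℕ) := ZMod.val_cast_of_lt i.isLt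
  have h2 : (((m : ℕ) : ZMod n)).val = m := ZMod.val_cast_of_lt hm
  rw [← h1, h, h2]

theorem dFinEqZ (hn : 0 < n) {z : ZMod n} {i : Fin n}
    (h : ((i : ℕ) : ZMod n) = z) : (i : ℕ) = z.val := by
  haveI : NeZero n := ⟨hn.ne'⟩
  have h1 : (((i : ℕ) : ZMod n)).val = (i : ℕ) := ZMod.val_cast_of_lt i.isLt
  rw [← h1, h]

theorem dCastVal (hn : 0 < n) (z : ZMod n) : ((z.val : ℕ) : ZMod n) = z := by
  haveI : NeZero n := ⟨hn.ne'⟩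
  exact ZMod.natCast_rightInverse z

theorem dSumMul (hn : 0 < n) (f : Fin n → B) (x : B) (i₀ : Fin n)
    (h : ∀ i : Fin n, i ≠ i₀ → f i * x = 0) :
    (∑ᶠ i : Fin n, f i) * x = f i₀ * x := by
  rw [finsum_eq_sum_of_fintype, Finset.sum_mul]
  exact Finset.sum_eq_single_of_mem i₀ (Finset.mem_univ _) (fun i _ hi => h i hi)

theorem dMulSum (hn : 0 < n) (f : Fin n → B) (x : B) (i₀ : Fin n)
    (h : ∀ i : Fin n, i ≠ i₀ → x * f i = 0) :
    x * (∑ᶠ i : Fin n, f i) = x * f i₀ := by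
  rw [finsum_eq_sum_of_fintype, Finset.mul_sum]
  exact Finset.sum_eq_single_of_mem i₀ (Finset.mem_univ _) (fun i _ hi => h i hi)

theorem dCast1 (hn : 0 < n) (z : ZMod n) : z + 1 + ((n - 1 : ℕ) : ZMod n) = z := by
  rw [Nat.cast_sub hn, Nat.cast_one, ZMod.natCast_self]
  ring

/-- `star (s ((n-1,0), z+1)) * U = s ((1,0), z)`. -/
theorem dAU (hn : 0 < n) (hs : (Delta n).IsCKFamily (deltaCocycle n θ) s)
    (U : B) (hU : U = ∑ᶠ i : Fin n, s ((n, 0), (i : ZMod n))) (z : ZMod n) :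
    star (s ((n - 1, 0), z + 1)) * U = s ((1, 0), z) := by
  haveI : NeZero n := ⟨hn.ne'⟩
  rw [hU, dMulSum hn _ _ ⟨(z+1).val, ZMod.val_lt _⟩ ?side]
  case side =>
    intro i hi
    refine dStarZero hs _ _ _ _ _ _ (fun hc => hi (Fin.ext (dFinEqZ hn hc.symm)))
  · rw [show (((⟨(z+1).val, ZMod.val_lt _⟩ : Fin n) : ℕ) : ZMod n) = z + 1 from dCastVal hn _]
    have hdec : s ((n - 1, 0), z + 1) * s ((1, 0), z) = s ((n, 0), z + 1) := by
      have h := dLmulA hs (n-1) 1 0 (z+1) z (by rw [dCast1 hn z])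
      rwa [show n - 1 + 1 = n from by omega] at h
    rw [← hdec, ← mul_assoc,
      dSrc hs (n-1) 0 (z+1) z (by simpa using dCast1 hn z), dAbsL hs]

/-- `star (s ((n-1,0), z+1)) * V = α ((z+1).val) • s ((0,1), z)`. -/
theorem dAV (hn : 0 < n) (hs : (Delta n).IsCKFamily (deltaCocycle n θ) s)
    (α : ℕ → ℂ) (V : B)
    (hV : V = ∑ᶠ i : Fin n, α i • s ((n - 1, 1), (i : ZMod n))) (z : ZMod n) :
    star (s ((n - 1, 0), z + 1)) * V = α ((z+1).val) • s ((0, 1), z) := by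
  haveI : NeZero n := ⟨hn.ne'⟩
  rw [hV, dMulSum hn _ _ ⟨(z+1).val, ZMod.val_lt _⟩ ?side]
  case side =>
    intro i hi
    rw [mul_smul_comm, dStarZero hs _ _ _ _ _ _ (fun hc => hi (Fin.ext (dFinEqZ hn hc.symm))), smul_zero]
  · rw [show (((⟨(z+1).val, ZMod.val_lt _⟩ : Fin n) : ℕ) : ZMod n) = z + 1 from dCastVal hn _,
      mul_smul_comm]
    congr 1
    have hdec : s ((n - 1, 0), z + 1) * s ((0, 1), z) = s ((n - 1, 1), z + 1) := by
      have h := dLmulB hs (n-1) 0 1 (z+1) z (by simpa using dCast1 hn z)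
      simpa using h
    rw [← hdec, ← mul_assoc,
      dSrc hs (n-1) 0 (z+1) z (by simpa using dCast1 hn z), dAbsL hs]

end DeltaAux3

section DeltaGen
open KGraph Real

variable {n : ℕ} {θ : ℝ}
variable {B : Type*} [NonUnitalCStarAlgebra B] [NormedSpace ℂ B] [StarModule ℂ B]
  [SMulCommClass ℂ B B] [IsScalarTower ℂ B B]
variable {s : (Delta n).M → B}

theorem dGen (hn : 0 < n) (hs : (Delta n).IsCKFamily (deltaCocycle n θ) s)
    (α : ℕ → ℂ) (hα1 : ∀ i ≤ n - 1, ‖α i‖ = 1) (U V : B)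
    (hU : U = ∑ᶠ i : Fin n, s ((n, 0), (i : ZMod n)))
    (hV : V = ∑ᶠ i : Fin n, α i • s ((n - 1, 1), (i : ZMod n))) :
    NonUnitalStarAlgebra.adjoin ℂ (Set.range s) =
      NonUnitalStarAlgebra.adjoin ℂ
        ({U, V} ∪ {x | ∃ j : ℕ, j + 2 ≤ n ∧ x = s ((1, 0), (j : ZMod n))}) := by
  haveI : NeZero n := ⟨hn.ne'⟩
  set SB := NonUnitalStarAlgebra.adjoin ℂ
      ({U, V} ∪ {x | ∃ j : ℕ, j + 2 ≤ n ∧ x = s ((1, 0), (j : ZMod n))}) with hSB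
  have hUmem : U ∈ SB := NonUnitalStarAlgebra.subset_adjoin ℂ _ (Or.inl (Or.inl rfl))
  have hVmem : V ∈ SB := NonUnitalStarAlgebra.subset_adjoin ℂ _ (Or.inl (Or.inr rfl))
  have hA2 : ∀ j : ℕ, j + 2 ≤ n → s ((1, 0), (j : ZMod n)) ∈ SB :=
    fun j hj => NonUnitalStarAlgebra.subset_adjoin ℂ _ (Or.inr ⟨j, hj, rfl⟩)
  -- all edges of degree (1,0) are in SB
  have hAall : ∀ z : ZMod n, s ((1, 0), z) ∈ SB := by
    rcases eq_or_lt_of_le (show 1 ≤ n from hn) with h1 | h2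
    · -- n = 1
      intro z
      subst h1
      have hU1 : U = s ((1, 0), z) := by
        rw [hU, finsum_eq_sum_of_fintype, Fin.sum_univ_one]
        exact congrArg s (Prod.ext rfl (Subsingleton.elim _ _))
      rw [← hU1]
      exact hUmem
    · -- n ≥ 2
      have hPath : ∀ p : ℕ, 1 ≤ p → ∀ w : ℕ, w + p ≤ n - 1 → s ((p, 0), (w : ZMod n)) ∈ SB := by
        intro p
        induction p with
        | zero => omega
        | succ p ih =>
          intro _ w hw
          rcases Nat.eq_or_lt_of_le (show 1 ≤ p + 1 from by omega) with h1 | hp1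
          · rw [← h1]
            exact hA2 w (by omega)
          · have hdec : s ((1, 0), (w : ZMod n)) * s ((p, 0), ((w + 1 : ℕ) : ZMod n)) =
                s ((1 + p, 0), (w : ZMod n)) :=
              dLmulA hs 1 p 0 _ _ (by push_cast; ring)
            rw [show p + 1 = 1 + p from by omega, ← hdec]
            exact mul_mem (hA2 w (by omega)) (ih (by omega) (w + 1) (by omega))
      have hPre0 : s ((n - 1, 0), (0 : ZMod n)) ∈ SB := by
        have := hPath (n - 1) (by omega) 0 (by omega)
        simpa using this
      have hLast : s ((1, 0), ((n - 1 : ℕ) : ZMod n)) ∈ SB := by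
        have h := dAU hn hs U hU ((n - 1 : ℕ) : ZMod n)
        rw [show (((n - 1 : ℕ) : ZMod n) + 1) = 0 from by
          rw [Nat.cast_sub hn, Nat.cast_one]; rw [ZMod.natCast_self]; ring] at h
        rw [← h]
        exact mul_mem (star_mem hPre0) hUmem
      intro z
      rcases Nat.lt_or_ge z.val (n - 1) with hv | hv
      · rw [← dCastVal hn z]
        exact hA2 z.val (by omega)
      · have : z.val = n - 1 := by have := ZMod.val_lt z; omega
        rw [← dCastVal hn z, this]
        exact hLast
  -- all vertices
  have hVert : ∀ z : ZMod n, s ((0, 0), z) ∈ SB := by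
    intro z
    have h := dSrc hs 1 0 (z - 1) z (by push_cast; ring)
    rw [← h]
    exact mul_mem (star_mem (hAall _)) (hAall _)
  -- all paths of degree (p, 0)
  have hAPath : ∀ (p : ℕ) (z : ZMod n), s ((p, 0), z) ∈ SB := by
    intro p
    induction p with
    | zero => exact hVert
    | succ p ih =>
      intro z
      have hdec : s ((1, 0), z) * s ((p, 0), z + 1) = s ((1 + p, 0), z) :=
        dLmulA hs 1 p 0 _ _ (by push_cast; ring)
      rw [show p + 1 = 1 + p from by omega, ← hdec]
      exact mul_mem (hAall z) (ih (z + 1))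
  -- all edges of degree (0, 1)
  have hB : ∀ z : ZMod n, s ((0, 1), z) ∈ SB := by
    intro z
    have h := dAV hn hs α V hV z
    have hβ : ‖α ((z + 1).val)‖ = 1 := hα1 _ (by have := ZMod.val_lt (z + 1); omega)
    have hβ1 : (starRingEnd ℂ) (α ((z + 1).val)) * α ((z + 1).val) = 1 := by
      rw [mul_comm, Complex.mul_conj]
      norm_cast
      rw [Complex.normSq_eq_norm_sq, hβ]
      norm_num
    have : s ((0, 1), z) = (starRingEnd ℂ) (α ((z + 1).val)) •
        (star (s ((n - 1, 0), z + 1)) * V) := by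
      rw [h, smul_smul, hβ1, one_smul]
    rw [this]
    exact SMulMemClass.smul_mem _ (mul_mem (star_mem (hAPath _ _)) hVmem)
  -- all paths of degree (0, q)
  have hBPath : ∀ (q : ℕ) (z : ZMod n), s ((0, q), z) ∈ SB := by
    intro q
    induction q with
    | zero => exact hVert
    | succ q ih =>
      intro z
      have hdec : s ((0, 1), z) * s ((0, q), z + 1) = s ((0, 1 + q), z) := by
        have := dLmulB hs 0 1 q z (z + 1) (by push_cast; ring)
        simpa using this
      rw [show q + 1 = 1 + q from by omega, ← hdec]
      exact mul_mem (hB z) (ih (z + 1))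
  have hAllMem : ∀ x : (Delta n).M, s x ∈ SB := by
    rintro ⟨⟨p, q⟩, z⟩
    have hdec : s ((p, 0), z) * s ((0, q), z + (p : ZMod n)) = s ((p, q), z) := by
      have := dLmulB hs p 0 q z (z + (p : ZMod n)) (by push_cast; ring)
      simpa using this
    rw [← hdec]
    exact mul_mem (hAPath p z) (hBPath q _)
  apply le_antisymm
  · rw [NonUnitalStarAlgebra.adjoin_le_iff]
    rintro x ⟨y, rfl⟩
    exact hAllMem y
  · rw [NonUnitalStarAlgebra.adjoin_le_iff]
    rintro x (hx | hx)
    · rcases hx with hx | hx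
      · rw [hx, hU, finsum_eq_sum_of_fintype]
        exact sum_mem fun i _ => NonUnitalStarAlgebra.subset_adjoin ℂ _ ⟨_, rfl⟩
      · rw [hx, hV, finsum_eq_sum_of_fintype]
        exact sum_mem fun i _ =>
          SMulMemClass.smul_mem _ (NonUnitalStarAlgebra.subset_adjoin ℂ _ ⟨_, rfl⟩)
    · obtain ⟨j, hj, rfl⟩ := hx
      exact NonUnitalStarAlgebra.subset_adjoin ℂ _ ⟨_, rfl⟩
end DeltaGen

section DeltaComm
open KGraph Real

variable {n : ℕ} {θ : ℝ}
variable {B : Type*} [NonUnitalCStarAlgebra B] [NormedSpace ℂ B] [StarModule ℂ B]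
  [SMulCommClass ℂ B B] [IsScalarTower ℂ B B]
variable {s : (Delta n).M → B}

theorem dCommute (hn : 0 < n) (hs : (Delta n).IsCKFamily (deltaCocycle n θ) s)
    (α : ℕ → ℂ)
    (hα2 : ∀ i, 1 ≤ i → i ≤ n - 1 →
      α i = Complex.exp (2 * Real.pi * Complex.I * θ) * α (i - 1))
    (U V : B)
    (hU : U = ∑ᶠ i : Fin n, s ((n, 0), (i : ZMod n)))
    (hV : V = ∑ᶠ i : Fin n, α i • s ((n - 1, 1), (i : ZMod n)))
    (j : ℕ) (hj : j + 2 ≤ n) :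
      Commute U (s ((1, 0), (j : ZMod n))) ∧
      Commute U (star (s ((1, 0), (j : ZMod n)))) ∧
      Commute V (s ((1, 0), (j : ZMod n))) ∧
      Commute V (star (s ((1, 0), (j : ZMod n)))) := by
  haveI : NeZero n := ⟨hn.ne'⟩
  have hj' : j < n := by omega
  have hj1 : j + 1 < n := by omega
  have hn2 : 2 ≤ n := by omega
  have hcast1 : ((j + 1 : ℕ) : ZMod n) = (j : ZMod n) + 1 := by push_cast; ring
  refine ⟨?_, ?_, ?_, ?_⟩
  · -- U with a_j
    show U * _ = _ * U
    rw [hU, dSumMul hn _ _ ⟨j, hj'⟩ ?s1, dMulSum hn _ _ ⟨j + 1, hj1⟩ ?s2,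
      dLmulA hs n 1 0 _ ((j : ZMod n)) ?h1, dLmulA hs 1 n 0 ((j : ZMod n)) _ ?h2,
      Nat.add_comm 1 n]
    case s1 =>
      intro i hi
      exact dZero hs n 0 1 0 ((i : ℕ) : ZMod n) ((j : ℕ) : ZMod n)
        (fun hc => hi (dFinEq hn hj'
          (by rw [ZMod.natCast_self] at hc; simpa using hc)))
    case s2 =>
      intro i hi
      exact dZero hs 1 0 n 0 ((j : ℕ) : ZMod n) ((i : ℕ) : ZMod n)
        (fun hc => hi (dFinEq hn hj1
          (by push_cast at hc ⊢; rw [← hc]; ring)))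
    case h1 =>
      simp only [Fin.val_mk, ZMod.natCast_self]
      push_cast
      try ring
    case h2 =>
      simp only [Fin.val_mk]
      push_cast
      try ring
  · -- U with star a_j
    show U * _ = _ * U
    rw [hU, dSumMul hn _ _ ⟨j + 1, hj1⟩ ?s3, dMulSum hn _ _ ⟨j, hj'⟩ ?s4]
    case s3 =>
      intro i hi
      exact dZeroStar hs n 0 1 0 ((i : ℕ) : ZMod n) ((j : ℕ) : ZMod n)
        ((i : ℕ) : ZMod n) ((j : ZMod n) + 1)
        (by rw [ZMod.natCast_self]; push_cast; ring) (by push_cast; ring)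
        (fun hc => hi (dFinEq hn hj1 (by push_cast at hc ⊢; linear_combination hc)))
    case s4 =>
      intro i hi
      exact dStarZero hs 1 0 n 0 ((j : ℕ) : ZMod n) ((i : ℕ) : ZMod n)
        (fun hc => hi (dFinEq hn hj' (by simpa using hc.symm)))
    · -- remaining: s((n,0), ↑⟨j+1⟩) * star a_j = star a_j * s((n,0), ↑⟨j⟩)
      show s ((n, 0), ((j + 1 : ℕ) : ZMod n)) * star (s ((1, 0), (j : ZMod n))) =
        star (s ((1, 0), (j : ZMod n))) * s ((n, 0), ((j : ℕ) : ZMod n))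
      have hdec1 : s ((n - 1, 0), ((j + 1 : ℕ) : ZMod n)) * s ((1, 0), (j : ZMod n)) =
          s ((n, 0), ((j + 1 : ℕ) : ZMod n)) := by
        have h := dLmulA hs (n - 1) 1 0 (((j + 1 : ℕ)) : ZMod n) ((j : ZMod n))
          (by push_cast [Nat.cast_sub hn]; rw [ZMod.natCast_self]; ring)
        rwa [show n - 1 + 1 = n from by omega] at h
      have hdec2 : s ((1, 0), (j : ZMod n)) * s ((n - 1, 0), (j : ZMod n) + 1) =
          s ((n, 0), (j : ZMod n)) := by
        have h := dLmulA hs 1 (n - 1) 0 ((j : ZMod n)) ((j : ZMod n) + 1)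
          (by push_cast; ring)
        rwa [show 1 + (n - 1) = n from by omega] at h
      rw [← hdec1, ← hdec2, mul_assoc, ← dProj hs ((j : ZMod n)),
        dAbsR hs (n - 1) 0 (((j + 1 : ℕ)) : ZMod n) ((j : ZMod n))
          (by push_cast [Nat.cast_sub hn]; rw [ZMod.natCast_self]; ring),
        ← mul_assoc, dSrc hs 1 0 ((j : ZMod n)) ((j : ZMod n) + 1) (by push_cast; ring),
        dAbsL hs, hcast1]
  · -- V with a_j
    show V * _ = _ * V
    rw [hV, dSumMul hn _ _ ⟨j, hj'⟩ ?s5, dMulSum hn _ _ ⟨j + 1, hj1⟩ ?s6,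
      smul_mul_assoc, mul_smul_comm,
      dLmul hs (n - 1) 1 1 0 _ ((j : ZMod n)) ?h3,
      dLmulA hs 1 (n - 1) 1 ((j : ZMod n)) _ ?h4,
      show (n - 1) + 1 = n from by omega, show 1 + (n - 1) = n from by omega,
      show (1 + 0 : ℕ) = 1 from rfl, smul_smul]
    case s5 =>
      intro i hi
      rw [smul_mul_assoc, dZero hs (n - 1) 1 1 0 ((i : ℕ) : ZMod n) ((j : ℕ) : ZMod n)
        (fun hc => hi (dFinEq hn hj' ?_)), smul_zero]
      rw [Nat.cast_sub hn] at hc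
      push_cast at hc ⊢
      rw [ZMod.natCast_self] at hc
      rw [← hc]; ring
    case s6 =>
      intro i hi
      rw [mul_smul_comm, dZero hs 1 0 (n - 1) 1 ((j : ℕ) : ZMod n) ((i : ℕ) : ZMod n)
        (fun hc => hi (dFinEq hn hj1 ?_)), smul_zero]
      push_cast at hc ⊢
      rw [← hc]; ring
    case h3 =>
      simp only [Fin.val_mk]
      push_cast [Nat.cast_sub hn]
      rw [ZMod.natCast_self]
      try ring
    case h4 =>
      simp only [Fin.val_mk]
      push_cast
      try ring
    · rw [show Complex.exp (2 * (Real.pi : ℂ) * Complex.I * (θ : ℂ) * (((1 : ℕ) : ℂ) * ((1 : ℕ) : ℂ)))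
          = Complex.exp (2 * Real.pi * Complex.I * θ) from by norm_num]
      have hα : α (j + 1) = Complex.exp (2 * Real.pi * Complex.I * θ) * α j := by
        have h := hα2 (j + 1) (by omega) (by omega)
        simpa using h
      rw [Fin.val_mk, Fin.val_mk, hα, mul_comm (α j)]
  · -- V with star a_j
    show V * _ = _ * V
    rw [hV, dSumMul hn _ _ ⟨j + 1, hj1⟩ ?s7, dMulSum hn _ _ ⟨j, hj'⟩ ?s8,
      smul_mul_assoc, mul_smul_comm]
    case s7 =>
      intro i hi
      rw [smul_mul_assoc,
        dZeroStar hs (n - 1) 1 1 0 ((i : ℕ) : ZMod n) ((j : ℕ) : ZMod n)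
          ((i : ℕ) : ZMod n) ((j : ZMod n) + 1)
          (by push_cast [Nat.cast_sub hn]; rw [ZMod.natCast_self]; ring)
          (by push_cast; ring)
          (fun hc => hi (dFinEq hn hj1 (by push_cast at hc ⊢; linear_combination hc))), smul_zero]
    case s8 =>
      intro i hi
      rw [mul_smul_comm,
        dStarZero hs 1 0 (n - 1) 1 ((j : ℕ) : ZMod n) ((i : ℕ) : ZMod n)
          (fun hc => hi (dFinEq hn hj' (by simpa using hc.symm))),
        smul_zero]
    · show (α (⟨j + 1, hj1⟩ : Fin n) : ℂ) • (s ((n - 1, 1), ((j + 1 : ℕ) : ZMod n)) *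
          star (s ((1, 0), (j : ZMod n)))) =
        α (⟨j, hj'⟩ : Fin n) • (star (s ((1, 0), (j : ZMod n))) *
          s ((n - 1, 1), ((j : ℕ) : ZMod n)))
      have hdecR : s ((1, 0), (j : ZMod n)) * s ((n - 2, 1), (j : ZMod n) + 1) =
          s ((n - 1, 1), (j : ZMod n)) := by
        have h := dLmulA hs 1 (n - 2) 1 ((j : ZMod n)) ((j : ZMod n) + 1) (by push_cast; ring)
        rwa [show 1 + (n - 2) = n - 1 from by omega] at h
      have hR : star (s ((1, 0), (j : ZMod n))) * s ((n - 1, 1), (j : ZMod n)) =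
          s ((n - 2, 1), (j : ZMod n) + 1) := by
        rw [← hdecR, ← mul_assoc, dSrc hs 1 0 ((j : ZMod n)) ((j : ZMod n) + 1)
          (by push_cast; ring), dAbsL hs]
      have hdecL := dLmul hs (n - 2) 1 1 0 (((j + 1 : ℕ)) : ZMod n) ((j : ZMod n))
        (by push_cast [Nat.cast_sub hn2]; rw [ZMod.natCast_self]; ring)
      rw [show n - 2 + 1 = n - 1 from by omega, show (1 + 0 : ℕ) = 1 from rfl] at hdecL
      rw [show Complex.exp (2 * (Real.pi : ℂ) * Complex.I * (θ : ℂ) *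
        (((1 : ℕ) : ℂ) * ((1 : ℕ) : ℂ))) = Complex.exp (2 * Real.pi * Complex.I * θ) from by
          norm_num] at hdecL
      have hL : s ((n - 1, 1), ((j + 1 : ℕ) : ZMod n)) * star (s ((1, 0), (j : ZMod n))) =
          Complex.exp (-(2 * Real.pi * Complex.I * θ)) •
            s ((n - 2, 1), ((j + 1 : ℕ) : ZMod n)) := by
        have h2 := congrArg (fun x => x * star (s ((1, 0), (j : ZMod n)))) hdecL
        simp only [smul_mul_assoc] at h2
        rw [mul_assoc, ← dProj hs ((j : ZMod n)),
          dAbsR hs (n - 2) 1 (((j + 1 : ℕ)) : ZMod n) ((j : ZMod n))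
            (by push_cast [Nat.cast_sub hn2]; rw [ZMod.natCast_self]; ring)] at h2
        rw [h2, smul_smul, ← Complex.exp_add,
          show -(2 * (Real.pi : ℂ) * Complex.I * (θ : ℂ)) + 2 * Real.pi * Complex.I * θ
            = 0 from (by ring),
          Complex.exp_zero, one_smul]
      rw [hL, hR, hcast1, smul_smul]
      congr 1
      have hα : α (j + 1) = Complex.exp (2 * Real.pi * Complex.I * θ) * α j := by
        have h := hα2 (j + 1) (by omega) (by omega)
        simpa using h
      rw [Fin.val_mk, Fin.val_mk, hα, mul_comm _ (α j), mul_assoc, ← Complex.exp_add]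
      rw [show 2 * (Real.pi : ℂ) * Complex.I * (θ : ℂ) +
        -(2 * Real.pi * Complex.I * θ) = 0 from by ring, Complex.exp_zero, mul_one]
end DeltaComm

open KGraph Real in
/-- For a Cuntz–Krieger `(Δ(n), d_* c_θ)`-family `s`, the unitaries
`U` and `V` commute with the `s_{(a,j)}` (`0 ≤ j ≤ n−2`) and their adjoints, and the
`C*`-subalgebra generated by `{s_λ}` equals the one generated by
`{U, V} ∪ {s_{(a,j)} : 0 ≤ j ≤ n−2}`. -/
theorem delta_generators (n : ℕ) (hn : 0 < n) (θ : ℝ)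
    {B : Type*} [NonUnitalCStarAlgebra B] [NormedSpace ℂ B] [StarModule ℂ B] [SMulCommClass ℂ B B]
    [IsScalarTower ℂ B B]
    (s : (Delta n).M → B) (hs : (Delta n).IsCKFamily (deltaCocycle n θ) s)
    (α : ℕ → ℂ) (hα1 : ∀ i ≤ n - 1, ‖α i‖ = 1)
    (hα2 : ∀ i, 1 ≤ i → i ≤ n - 1 →
      α i = Complex.exp (2 * π * Complex.I * θ) * α (i - 1))
    (U V : B)
    (hU : U = ∑ᶠ i : Fin n, s ((n, 0), (i : ZMod n)))
    (hV : V = ∑ᶠ i : Fin n, α i • s ((n - 1, 1), (i : ZMod n))) :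
    (∀ j : ℕ, j + 2 ≤ n →
      Commute U (s ((1, 0), (j : ZMod n))) ∧
      Commute U (star (s ((1, 0), (j : ZMod n)))) ∧
      Commute V (s ((1, 0), (j : ZMod n))) ∧
      Commute V (star (s ((1, 0), (j : ZMod n))))) ∧
    (NonUnitalStarAlgebra.adjoin ℂ (Set.range s)).topologicalClosure =
      (NonUnitalStarAlgebra.adjoin ℂ
        ({U, V} ∪ {x | ∃ j : ℕ, j + 2 ≤ n ∧ x = s ((1, 0), (j : ZMod n))})).topologicalClosure :=
  ⟨fun j hj => dCommute hn hs α hα2 U V hU hV j hj,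
    congrArg _ (dGen hn hs α hα1 U V hU hV)⟩
end

section
/- Let (E,w) be a singly connected weighted Bratteli diagram. For each edge e ∈ E^1 write l_e := w(s(e))/w(r(e)) ∈ ℕ. For n ≥ 1 define group homomorphisms A'_n, B_n : ⊕_{v ∈ E_n^0} ℤ² → ⊕_{u ∈ E_{n+1}^0} ℤ² on generators by A'_n((p,q)δ_v) = Σ_{e ∈ vE^1} (l_e p, q) δ_{s(e)} and B_n((p,q)δ_v) = Σ_{e ∈ vE^1} (p + (1 − l_e) q, l_e q) δ_{s(e)}, where gδ_v denotes the element of the direct sum supported at v with value g. Then there is a group isomorphism from the direct limit of the sequence (⊕_{v ∈ E_n^0} ℤ², B_n) onto the direct limit of the sequence (⊕_{v ∈ E_n^0} ℤ², A'_n) which, for every n, v ∈ E_n^0 and (a,b) ∈ ℤ², carries the image in the direct limit of (a,b)δ_v at stage n to the image in the direct limit of (b, a+b)δ_v at stage n. -/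
open scoped BigOperators NNReal ENNReal

/-- A Bratteli diagram: a directed graph whose vertices are partitioned into finite
nonempty levels (level `n` here corresponds to `E_{n+1}^0` in the paper), each edge
pointing from a vertex at level `n+1` (its source) to one at level `n` (its range),
such that every vertex receives an edge and every vertex not at level `0` emits one. -/
structure BratteliDiagram where
  V : Type
  Edge : Type
  esrc : Edge → V
  erng : Edge → V
  level : V → ℕ
  level_src : ∀ e, level (esrc e) = level (erng e) + 1
  level_finite : ∀ n, {v | level v = n}.Finite
  level_nonempty : ∀ n, ∃ v, level v = n
  rcv : ∀ v, ∃ e, erng e = v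
  emit : ∀ v, level v ≠ 0 → ∃ e, esrc e = v

namespace BratteliDiagram

/-- A Bratteli diagram is singly connected if there is at most one edge between any
two vertices. -/
def SinglyConnected (E : BratteliDiagram) : Prop :=
  ∀ e f : E.Edge, E.erng e = E.erng f → E.esrc e = E.esrc f → e = f

/-- A graph trace on a Bratteli diagram. -/
def IsTrace (E : BratteliDiagram) (h : E.V → ℝ≥0) : Prop :=
  ∀ v, h v = ∑ᶠ e ∈ {e | E.erng e = v}, h (E.esrc e)

/-- `HasPath E n v u`: there is a path of length `n` in `E` with range `v` and
source `u`. -/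
def HasPath (E : BratteliDiagram) : ℕ → E.V → E.V → Prop
  | 0, v, u => v = u
  | n + 1, v, u => ∃ e, E.erng e = v ∧ HasPath E n (E.esrc e) u

/-- A Bratteli diagram is cofinal if for all `v, v'` there exists `n` such that the
source of every path of length `n` with range `v'` is connected to `v`. -/
def Cofinal (E : BratteliDiagram) : Prop :=
  ∀ v v' : E.V, ∃ n : ℕ, ∀ u : E.V, E.HasPath n v' u → ∃ m : ℕ, E.HasPath m v u

end BratteliDiagram

open KGraph

/-- The `(k+1)`-graph `Λ_E` associated to a Bratteli diagram `E` of covering maps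
`p_f : Λ_{s(f)} → Λ_{r(f)}` between `k`-graphs `(Λ_v)_{v ∈ E^0}`, together with its
defining data: injective functors `ι_v : Λ_v → Λ_E` and a bijection
`e : ⨆_{v ∉ E_1^0} Λ_v^0 × E^1 v → Λ_E^{e_{k+1}}` satisfying properties (1)–(5). -/
structure BCSLimit {k : ℕ} (E : BratteliDiagram) (Λv : E.V → KGraph k)
    (pe : ∀ f : E.Edge, (Λv (E.esrc f)).M → (Λv (E.erng f)).M) where
  Lam : KGraph (k + 1)
  ι : ∀ v, (Λv v).M → Lam.M
  ι_inj : ∀ v, Function.Injective (ι v)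
  ι_src : ∀ v x, Lam.src (ι v x) = ι v ((Λv v).src x)
  ι_rng : ∀ v x, Lam.rng (ι v x) = ι v ((Λv v).rng x)
  ι_comp : ∀ v x y, (Λv v).Composable x y →
    Lam.comp (ι v x) (ι v y) = ι v ((Λv v).comp x y)
  ι_deg : ∀ v x, Lam.deg (ι v x) = Fin.snoc ((Λv v).deg x) 0
  ι_disjoint : ∀ v u x y, ι v x = ι u y → v = u
  ι_union : ∀ z : Lam.M, Lam.deg z (Fin.last k) = 0 → ∃ v x, ι v x = z
  edge : (Σ f : E.Edge, (Λv (E.esrc f)).M) → Lam.M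
  edge_deg : ∀ q : Σ f : E.Edge, (Λv (E.esrc f)).M, (Λv (E.esrc q.1)).IsVertex q.2 →
    Lam.deg (edge q) = Fin.snoc (fun _ : Fin k => 0) 1
  edge_injOn : Set.InjOn edge {q | (Λv (E.esrc q.1)).IsVertex q.2}
  edge_surj : ∀ z : Lam.M, Lam.deg z = Fin.snoc (fun _ : Fin k => 0) 1 →
    ∃ q, (Λv (E.esrc q.1)).IsVertex q.2 ∧ edge q = z
  edge_src : ∀ (f : E.Edge) (x : (Λv (E.esrc f)).M), (Λv (E.esrc f)).IsVertex x →
    Lam.src (edge ⟨f, x⟩) = ι (E.esrc f) x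
  edge_rng : ∀ (f : E.Edge) (x : (Λv (E.esrc f)).M), (Λv (E.esrc f)).IsVertex x →
    Lam.rng (edge ⟨f, x⟩) = ι (E.erng f) (pe f x)
  edge_comm : ∀ (f : E.Edge) (x : (Λv (E.esrc f)).M),
    Lam.comp (edge ⟨f, (Λv (E.esrc f)).rng x⟩) (ι (E.esrc f) x) =
      Lam.comp (ι (E.erng f) (pe f x)) (edge ⟨f, (Λv (E.esrc f)).src x⟩)
open scoped DirectSum

attribute [local instance] Classical.propDecidable

/-- The transition homomorphisms `G i →+ G j` (for `i ≤ j`) generated by a sequence of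
homomorphisms `G n →+ G (n+1)`. -/
noncomputable def natTransMaps {G : ℕ → Type*} [∀ n, AddCommGroup (G n)]
    (f : ∀ n, G n →+ G (n + 1)) : ∀ i j : ℕ, i ≤ j → (G i →+ G j) :=
  fun i _ h => Nat.leRecOn h (fun {m} g => (f m).comp g) (AddMonoidHom.id (G i))

/-- For `u` a vertex at level `n+1` of a Bratteli diagram and `e` an edge emitted
by `u`, the range of `e` as a vertex at level `n`. -/
def BratteliDiagram.rngV (E : BratteliDiagram) {n : ℕ}
    (u : {v : E.V // E.level v = n + 1}) (e : {e : E.Edge // E.esrc e = u.1}) :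
    {v : E.V // E.level v = n} :=
  ⟨E.erng e.1, by
    have h := E.level_src e.1
    rw [e.2, u.2] at h
    omega⟩

/-- The equivalence `(a,b) ↦ (b, a+b)` on `ℤ²`. -/
def rank3T2 : (ℤ × ℤ) ≃+ (ℤ × ℤ) where
  toFun p := (p.2, p.1 + p.2)
  invFun p := (p.2 - p.1, p.1)
  left_inv p := by simp
  right_inv p := by simp [Prod.ext_iff]
  map_add' p q := by simp [Prod.ext_iff]; ring

@[simp] theorem rank3T2_apply (p : ℤ × ℤ) : rank3T2 p = (p.2, p.1 + p.2) := rfl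

/-- The equivalence applied componentwise to a direct sum of copies of `ℤ²`. -/
noncomputable def rank3Tlift (ι : Type) : (⨁ _ : ι, ℤ × ℤ) ≃+ (⨁ _ : ι, ℤ × ℤ) :=
  DFinsupp.mapRange.addEquiv (fun _ => rank3T2)

theorem rank3Tlift_apply (ι : Type) (x : ⨁ _ : ι, ℤ × ℤ) (v : ι) :
    rank3Tlift ι x v = rank3T2 (x v) :=
  DFinsupp.mapRange_apply _ (fun _ => map_zero rank3T2) x v

theorem rank3Tlift_of (ι : Type) [DecidableEq ι] (v : ι) (g : ℤ × ℤ) :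
    rank3Tlift ι (DirectSum.of (fun _ => ℤ × ℤ) v g)
      = DirectSum.of (fun _ => ℤ × ℤ) v (rank3T2 g) :=
  DFinsupp.mapRange_single (hf := fun _ => map_zero rank3T2)

open BratteliDiagram in
/-- For a singly connected weighted Bratteli diagram `(E, w)`, with
`l_e := w(s(e))/w(r(e))`, the direct limit of `(⊕_{v ∈ E_n^0} ℤ², B_n)` is isomorphic
to the direct limit of `(⊕_{v ∈ E_n^0} ℤ², A'_n)` via an isomorphism carrying the
class of `(a,b)δ_v` at stage `n` to the class of `(b, a+b)δ_v` at stage `n`, where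
`A'_n((p,q)δ_v) = Σ_{e ∈ vE¹} (l_e p, q) δ_{s(e)}` and
`B_n((p,q)δ_v) = Σ_{e ∈ vE¹} (p + (1−l_e) q, l_e q) δ_{s(e)}`. -/
theorem rank3_K1_iso_K0 (E : BratteliDiagram) (hsc : E.SinglyConnected)
    (w : E.V → ℕ) (hw : ∀ v, 0 < w v)
    (hdvd : ∀ f : E.Edge, w (E.erng f) ∣ w (E.esrc f))
    (A B : ∀ n : ℕ, (⨁ _ : {v : E.V // E.level v = n}, ℤ × ℤ) →+
      (⨁ _ : {v : E.V // E.level v = n + 1}, ℤ × ℤ))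
    (hA : ∀ (n : ℕ) (x : ⨁ _ : {v : E.V // E.level v = n}, ℤ × ℤ)
        (u : {v : E.V // E.level v = n + 1}),
      A n x u = ∑ᶠ e : {e : E.Edge // E.esrc e = u.1},
        (((w (E.esrc e.1) / w (E.erng e.1) : ℕ) : ℤ) * (x (E.rngV u e)).1,
          (x (E.rngV u e)).2))
    (hB : ∀ (n : ℕ) (x : ⨁ _ : {v : E.V // E.level v = n}, ℤ × ℤ)
        (u : {v : E.V // E.level v = n + 1}),
      B n x u = ∑ᶠ e : {e : E.Edge // E.esrc e = u.1},
        ((x (E.rngV u e)).1 +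
            (1 - ((w (E.esrc e.1) / w (E.erng e.1) : ℕ) : ℤ)) * (x (E.rngV u e)).2,
          ((w (E.esrc e.1) / w (E.erng e.1) : ℕ) : ℤ) * (x (E.rngV u e)).2)) :
    ∃ φ : AddCommGroup.DirectLimit (fun n => ⨁ _ : {v : E.V // E.level v = n}, ℤ × ℤ)
          (natTransMaps B) ≃+
        AddCommGroup.DirectLimit (fun n => ⨁ _ : {v : E.V // E.level v = n}, ℤ × ℤ)
          (natTransMaps A),
      ∀ (n : ℕ) (v : {v : E.V // E.level v = n}) (a b : ℤ),
        φ (AddCommGroup.DirectLimit.of _ (natTransMaps B) n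
            (DirectSum.of (fun _ => ℤ × ℤ) v (a, b))) =
          AddCommGroup.DirectLimit.of _ (natTransMaps A) n
            (DirectSum.of (fun _ => ℤ × ℤ) v (b, a + b)) := by
  have key : ∀ (n : ℕ) (x : ⨁ _ : {v : E.V // E.level v = n}, ℤ × ℤ),
      A n (rank3Tlift _ x) = rank3Tlift _ (B n x) := by
    intro n x
    refine DFinsupp.ext fun u => ?_
    haveI hfinV : Finite {v : E.V // E.level v = n} :=
      Set.Finite.to_subtype (E.level_finite n)
    haveI hfinE : Finite {e : E.Edge // E.esrc e = u.1} := by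
      refine Finite.of_injective (E.rngV u) ?_
      intro e e' h
      exact Subtype.ext (hsc _ _ (congrArg Subtype.val h) (e.2.trans e'.2.symm))
    haveI := Fintype.ofFinite {e : E.Edge // E.esrc e = u.1}
    rw [rank3Tlift_apply, hA, hB, finsum_eq_sum_of_fintype, finsum_eq_sum_of_fintype,
      map_sum]
    refine Finset.sum_congr rfl fun e _ => ?_
    simp only [rank3Tlift_apply, rank3T2_apply]
    refine Prod.ext rfl ?_
    ring
  have comm : ∀ (i j : ℕ) (h : i ≤ j) (x : ⨁ _ : {v : E.V // E.level v = i}, ℤ × ℤ),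
      natTransMaps A i j h (rank3Tlift _ x) = rank3Tlift _ (natTransMaps B i j h x) := by
    intro i j h
    induction j, h using Nat.le_induction with
    | base =>
      intro x
      simp only [natTransMaps, Nat.leRecOn_self, AddMonoidHom.id_apply]
    | succ j hij ih =>
      intro x
      have hAs : natTransMaps A i (j + 1) (hij.trans (Nat.le_succ j)) =
          (A j).comp (natTransMaps A i j hij) := Nat.leRecOn_succ hij _
      have hBs : natTransMaps B i (j + 1) (hij.trans (Nat.le_succ j)) =
          (B j).comp (natTransMaps B i j hij) := Nat.leRecOn_succ hij _
      rw [hAs, hBs, AddMonoidHom.comp_apply, AddMonoidHom.comp_apply, ih, key]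
  have he : ∀ (i j : ℕ) (h : i ≤ j),
      (rank3Tlift {v : E.V // E.level v = j}).toAddMonoidHom.comp (natTransMaps B i j h) =
        (natTransMaps A i j h).comp (rank3Tlift {v : E.V // E.level v = i}).toAddMonoidHom := by
    intro i j h
    exact DFunLike.ext _ _ fun x => (comm i j h x).symm
  refine ⟨AddCommGroup.DirectLimit.congr (fun n => rank3Tlift _)
    (fun i j h => DFunLike.ext _ _ fun x => (comm i j h x).symm), ?_⟩
  intro n v a b
  rw [AddCommGroup.DirectLimit.congr_apply_of]
  congr 1
  exact rank3Tlift_of _ v (a, b)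
end

section
/- Let (E,w) be a singly connected weighted Bratteli diagram and let θ ∈ ℝ∖ℚ. For v ∈ E^0 let G_v := (1/w(v))ℤ + θℤ ⊆ ℝ, and for n ≥ 1 define A_n : ⊕_{v ∈ E_n^0} G_v → ⊕_{u ∈ E_{n+1}^0} G_u on generators by A_n(g δ_v) = Σ_{e ∈ vE^1} g δ_{s(e)} (well-defined since w(v) divides w(s(e))). Let G be the direct limit of the sequence (⊕_{v ∈ E_n^0} G_v, A_n), and let G⁺ ⊆ G be the union over n of the images in G of the cones {x ∈ ⊕_{v ∈ E_n^0} G_v : x_v ≥ 0 for all v ∈ E_n^0}. Then (G, G⁺) is a partially ordered abelian group (in particular G⁺ ∩ (−G⁺) = {0} and G⁺ + G⁺ ⊆ G⁺) which is unperforated (for a ∈ G and an integer m ≥ 1, m·a ∈ G⁺ implies a ∈ G⁺) and has the Riesz interpolation property: for all finite families (a_i)_{i∈I} and (b_j)_{j∈J} in G with a_i ≤ b_j for all i ∈ I, j ∈ J (where x ≤ y means y − x ∈ G⁺), there exists c ∈ G with a_i ≤ c ≤ b_j for all i, j. -/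
open scoped BigOperators NNReal ENNReal

open KGraph

open scoped DirectSum

attribute [local instance] Classical.propDecidable

section NatTransAux

variable {G : ℕ → Type*} [∀ n, AddCommGroup (G n)] (f : ∀ n, G n →+ G (n + 1))

theorem natTransMaps_self (i : ℕ) (h : i ≤ i) (x : G i) :
    natTransMaps f i i h x = x := by
  have : natTransMaps f i i h = AddMonoidHom.id (G i) :=
    Nat.leRecOn_self (C := fun k => G i →+ G k) (next := fun {m} g => (f m).comp g)
      (AddMonoidHom.id (G i))
  rw [this]; rfl

theorem natTransMaps_succ {i j : ℕ} (hij : i ≤ j) (h : i ≤ j + 1) (x : G i) :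
    natTransMaps f i (j + 1) h x = f j (natTransMaps f i j hij x) := by
  have : natTransMaps f i (j + 1) h = (f j).comp (natTransMaps f i j hij) :=
    Nat.leRecOn_succ (C := fun k => G i →+ G k) (next := fun {m} g => (f m).comp g) hij
      (AddMonoidHom.id (G i))
  rw [this]; rfl

theorem natTransMaps_trans {i j k : ℕ} (hij : i ≤ j) (hjk : j ≤ k) (x : G i) :
    natTransMaps f j k hjk (natTransMaps f i j hij x) =
      natTransMaps f i k (hij.trans hjk) x := by
  induction k, hjk using Nat.le_induction with
  | base => rw [natTransMaps_self]
  | succ k hjk ih =>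
      rw [natTransMaps_succ f hjk (hjk.trans (Nat.le_succ k)),
        natTransMaps_succ f (hij.trans hjk) ((hij.trans hjk).trans (Nat.le_succ k)), ih]

end NatTransAux

theorem fold_mem_of_choice {α ι : Type*} {p : α → Prop} {op : α → α → α}
    [Std.Commutative op] [Std.Associative op]
    (hop : ∀ a b, op a b = a ∨ op a b = b)
    {s : Finset ι} {b : α} {f : ι → α} (hb : p b) (hf : ∀ i ∈ s, p (f i)) :
    p (s.fold op b f) := by
  classical
  induction s using Finset.cons_induction with
  | empty => simpa using hb
  | cons a s ha ih =>
      rw [Finset.fold_cons]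
      rcases hop (f a) (s.fold op b f) with h | h <;> rw [h]
      · exact hf a (Finset.mem_cons_self a s)
      · exact ih fun i hi => hf i (Finset.mem_cons_of_mem hi)

set_option maxHeartbeats 1600000 in
open BratteliDiagram in
/-- For a singly connected weighted Bratteli diagram `(E,w)` and
irrational `θ`, the direct limit `G` of `(⊕_{v ∈ E_n^0} (1/w(v))ℤ + θℤ, A_n)`, with
positive cone `G⁺` the union of the images of the coordinatewise-nonnegative cones,
is a partially ordered abelian group which is unperforated and has the Riesz
interpolation property. -/
theorem rank3_K0_riesz (E : BratteliDiagram) (hsc : E.SinglyConnected)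
    (w : E.V → ℕ) (hw : ∀ v, 0 < w v)
    (hdvd : ∀ f : E.Edge, w (E.erng f) ∣ w (E.esrc f))
    (θ : ℝ) (hθ : Irrational θ)
    (A : ∀ n : ℕ,
      (⨁ v : {v : E.V // E.level v = n}, AddSubgroup.closure {((w v.1 : ℝ))⁻¹, θ}) →+
      (⨁ v : {v : E.V // E.level v = n + 1}, AddSubgroup.closure {((w v.1 : ℝ))⁻¹, θ}))
    (hA : ∀ (n : ℕ)
        (x : ⨁ v : {v : E.V // E.level v = n}, AddSubgroup.closure {((w v.1 : ℝ))⁻¹, θ})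
        (u : {v : E.V // E.level v = n + 1}),
      ((A n x) u : ℝ) = ∑ᶠ e : {e : E.Edge // E.esrc e = u.1}, (x (E.rngV u e) : ℝ))
    (Gpos : Set (AddCommGroup.DirectLimit
      (fun n => ⨁ v : {v : E.V // E.level v = n}, AddSubgroup.closure {((w v.1 : ℝ))⁻¹, θ})
      (natTransMaps A)))
    (hGpos : Gpos = ⋃ n : ℕ,
      (AddCommGroup.DirectLimit.of _ (natTransMaps A) n) ''
        {x | ∀ v, 0 ≤ ((x v : ℝ))}) :
    (Gpos ∩ {x | -x ∈ Gpos} = {0}) ∧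
    (∀ a ∈ Gpos, ∀ b ∈ Gpos, a + b ∈ Gpos) ∧
    (∀ a, ∀ m : ℕ, 1 ≤ m → m • a ∈ Gpos → a ∈ Gpos) ∧
    (∀ (r l : ℕ) (a : Fin r → _) (b : Fin l → _),
      (∀ i j, b j - a i ∈ Gpos) →
      ∃ c, (∀ i, c - a i ∈ Gpos) ∧ (∀ j, b j - c ∈ Gpos)) := by
  classical
  haveI DS : DirectedSystem
      (fun n => ⨁ v : {v : E.V // E.level v = n}, AddSubgroup.closure {((w v.1 : ℝ))⁻¹, θ})
      (fun i j h => natTransMaps A i j h) :=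
    ⟨fun i x => natTransMaps_self A i _ x, fun k j i hij hjk x => natTransMaps_trans A hij hjk x⟩
  -- coordinates of sums/differences
  have coe_sub : ∀ (k : ℕ)
      (x y : ⨁ v : {v : E.V // E.level v = k}, AddSubgroup.closure {((w v.1 : ℝ))⁻¹, θ})
      (v : {v : E.V // E.level v = k}),
      (((x - y) v : ℝ)) = ((x v : ℝ)) - ((y v : ℝ)) := by
    intro k x y v
    rw [DFinsupp.sub_apply, AddSubgroup.coe_sub]
  have coe_add : ∀ (k : ℕ)
      (x y : ⨁ v : {v : E.V // E.level v = k}, AddSubgroup.closure {((w v.1 : ℝ))⁻¹, θ})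
      (v : {v : E.V // E.level v = k}),
      (((x + y) v : ℝ)) = ((x v : ℝ)) + ((y v : ℝ)) := by
    intro k x y v
    rw [DFinsupp.add_apply, AddSubgroup.coe_add]
  -- positivity is preserved by the transition maps
  have key : ∀ (i j : ℕ) (h : i ≤ j)
      (x : ⨁ v : {v : E.V // E.level v = i}, AddSubgroup.closure {((w v.1 : ℝ))⁻¹, θ}),
      (∀ v, 0 ≤ ((x v : ℝ))) → ∀ v, 0 ≤ (((natTransMaps A i j h x) v : ℝ)) := by
    intro i j h
    induction j, h using Nat.le_induction with
    | base => intro x hx v; rw [natTransMaps_self]; exact hx v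
    | succ j hij ih =>
        intro x hx u
        rw [natTransMaps_succ A hij, hA]
        exact finsum_nonneg fun e => ih x hx _
  subst hGpos
  have memP : ∀ z, (z ∈ ⋃ n : ℕ,
      (AddCommGroup.DirectLimit.of _ (natTransMaps A) n) '' {x | ∀ v, 0 ≤ ((x v : ℝ))}) ↔
      ∃ n x, (∀ v, 0 ≤ ((x v : ℝ))) ∧ AddCommGroup.DirectLimit.of _ (natTransMaps A) n x = z := by
    intro z
    simp only [Set.mem_iUnion, Set.mem_image, Set.mem_setOf_eq]
  have repr : ∀ z, ∃ n x, AddCommGroup.DirectLimit.of _ (natTransMaps A) n x = z := fun z =>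
    AddCommGroup.DirectLimit.induction_on z fun n x => ⟨n, x, rfl⟩
  have zeroPos : (0 : AddCommGroup.DirectLimit _ (natTransMaps A)) ∈ ⋃ n : ℕ,
      (AddCommGroup.DirectLimit.of _ (natTransMaps A) n) '' {x | ∀ v, 0 ≤ ((x v : ℝ))} := by
    refine (memP 0).2 ⟨0, 0, fun v => ?_, map_zero _⟩
    simp
  refine ⟨?_, ?_, ?_, ?_⟩
  · -- Gpos ∩ (-Gpos) = {0}
    ext z
    simp only [Set.mem_inter_iff, Set.mem_setOf_eq, Set.mem_singleton_iff]
    constructor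
    · rintro ⟨hz, hz'⟩
      obtain ⟨n, x, hx, rfl⟩ := (memP _).1 hz
      obtain ⟨m, y, hy, hyz⟩ := (memP _).1 hz'
      set N := max n m with hN
      have h0 : AddCommGroup.DirectLimit.of _ (natTransMaps A) N
          (natTransMaps A n N (le_max_left n m) x + natTransMaps A m N (le_max_right n m) y)
          = 0 := by
        rw [map_add, AddCommGroup.DirectLimit.of_f, AddCommGroup.DirectLimit.of_f, hyz,
          add_neg_cancel]
      obtain ⟨K, hNK, hK⟩ := AddCommGroup.DirectLimit.of.zero_exact _ _ h0
      rw [map_add] at hK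
      have hXpos := key n K ((le_max_left n m).trans hNK) x hx
      have hYpos := key m K ((le_max_right n m).trans hNK) y hy
      rw [natTransMaps_trans, natTransMaps_trans] at hK
      have hX0 : natTransMaps A n K ((le_max_left n m).trans hNK) x = 0 := by
        refine DFinsupp.ext fun v => ?_
        have hv : ((natTransMaps A n K ((le_max_left n m).trans hNK) x v : ℝ)) +
            ((natTransMaps A m K ((le_max_right n m).trans hNK) y v : ℝ)) = 0 := by
          rw [← coe_add]
          rw [hK]
          simp
        have h1 := hXpos v
        have h2 := hYpos v
        have : ((natTransMaps A n K ((le_max_left n m).trans hNK) x v : ℝ)) = 0 := by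
          linarith
        rw [DFinsupp.zero_apply]
        exact Subtype.ext (by simpa using this)
      calc AddCommGroup.DirectLimit.of _ (natTransMaps A) n x
          = AddCommGroup.DirectLimit.of _ (natTransMaps A) K
            (natTransMaps A n K ((le_max_left n m).trans hNK) x) :=
            (AddCommGroup.DirectLimit.of_f _ _).symm
        _ = 0 := by rw [hX0, map_zero]
    · rintro rfl
      exact ⟨zeroPos, by rw [neg_zero]; exact zeroPos⟩
  · -- closed under addition
    intro a ha b hb
    obtain ⟨n, x, hx, rfl⟩ := (memP a).1 ha
    obtain ⟨m, y, hy, rfl⟩ := (memP b).1 hb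
    refine (memP _).2 ⟨max n m,
      natTransMaps A n _ (le_max_left n m) x + natTransMaps A m _ (le_max_right n m) y,
      fun v => ?_, ?_⟩
    · rw [coe_add]
      exact add_nonneg (key n _ _ x hx v) (key m _ _ y hy v)
    · rw [map_add, AddCommGroup.DirectLimit.of_f, AddCommGroup.DirectLimit.of_f]
  · -- unperforated
    intro a m hm hma
    obtain ⟨p, y, hy⟩ := repr a
    obtain ⟨n, x, hx, hxa⟩ := (memP _).1 hma
    set N := max n p with hN
    have h0 : AddCommGroup.DirectLimit.of _ (natTransMaps A) N
        (natTransMaps A n N (le_max_left n p) x - m • natTransMaps A p N (le_max_right n p) y)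
        = 0 := by
      rw [map_sub, map_nsmul, AddCommGroup.DirectLimit.of_f, AddCommGroup.DirectLimit.of_f,
        hxa, hy, sub_self]
    obtain ⟨K, hNK, hK⟩ := AddCommGroup.DirectLimit.of.zero_exact _ _ h0
    rw [map_sub, map_nsmul, natTransMaps_trans, natTransMaps_trans, sub_eq_zero] at hK
    set Y := natTransMaps A p K ((le_max_right n p).trans hNK) y with hYdef
    have hXpos := key n K ((le_max_left n p).trans hNK) x hx
    have hYpos : ∀ v, 0 ≤ ((Y v : ℝ)) := by
      intro v
      have hv : ((natTransMaps A n K ((le_max_left n p).trans hNK) x v : ℝ)) =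
          (((m • Y) v : ℝ)) := by rw [hK]
      have hsm : (((m • Y) v : ℝ)) = (m : ℝ) * ((Y v : ℝ)) := by
        rw [DFinsupp.smul_apply, AddSubgroup.coe_nsmul, nsmul_eq_mul]
      have h1 := hXpos v
      rw [hv, hsm] at h1
      have hmpos : (0 : ℝ) < m := by exact_mod_cast hm
      exact nonneg_of_mul_nonneg_right h1 hmpos
    refine (memP _).2 ⟨K, Y, hYpos, ?_⟩
    rw [hYdef, AddCommGroup.DirectLimit.of_f, hy]
  · -- Riesz interpolation
    intro r l a b hab
    choose p α ha using fun i => repr (a i)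
    choose q β hb using fun j => repr (b j)
    choose n x hx hxeq using fun i : Fin r => fun j : Fin l => (memP (b j - a i)).1 (hab i j)
    set N : ℕ := (Finset.univ.sup p ⊔ Finset.univ.sup q) ⊔
      Finset.univ.sup (fun i => Finset.univ.sup (n i)) with hNdef
    have hpN : ∀ i, p i ≤ N := fun i => by
      rw [hNdef]
      exact le_trans (Finset.le_sup (Finset.mem_univ i)) (le_trans le_sup_left le_sup_left)
    have hqN : ∀ j, q j ≤ N := fun j => by
      rw [hNdef]
      exact le_trans (Finset.le_sup (Finset.mem_univ j)) (le_trans le_sup_right le_sup_left)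
    have hnN : ∀ i j, n i j ≤ N := fun i j => by
      rw [hNdef]
      have h1 : n i j ≤ Finset.univ.sup (n i) := Finset.le_sup (Finset.mem_univ j)
      have h2 : Finset.univ.sup (n i) ≤ Finset.univ.sup (fun i => Finset.univ.sup (n i)) :=
        Finset.le_sup (f := fun i => Finset.univ.sup (n i)) (Finset.mem_univ i)
      exact le_trans (le_trans h1 h2) le_sup_right
    have h0 : ∀ i j, AddCommGroup.DirectLimit.of _ (natTransMaps A) N
        ((natTransMaps A (q j) N (hqN j) (β j) - natTransMaps A (p i) N (hpN i) (α i)) -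
          natTransMaps A (n i j) N (hnN i j) (x i j)) = 0 := by
      intro i j
      rw [map_sub, map_sub, AddCommGroup.DirectLimit.of_f, AddCommGroup.DirectLimit.of_f,
        AddCommGroup.DirectLimit.of_f, ha, hb, hxeq, sub_self]
    choose K hNK h0K using fun i j => AddCommGroup.DirectLimit.of.zero_exact _ _ (h0 i j)
    set M : ℕ := N ⊔ Finset.univ.sup (fun i => Finset.univ.sup (K i)) with hMdef
    have hNM : N ≤ M := by rw [hMdef]; exact le_sup_left
    have hKM : ∀ i j, K i j ≤ M := fun i j => by
      rw [hMdef]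
      have h1 : K i j ≤ Finset.univ.sup (K i) := Finset.le_sup (Finset.mem_univ j)
      have h2 : Finset.univ.sup (K i) ≤ Finset.univ.sup (fun i => Finset.univ.sup (K i)) :=
        Finset.le_sup (f := fun i => Finset.univ.sup (K i)) (Finset.mem_univ i)
      exact le_trans (le_trans h1 h2) le_sup_right
    set α' : Fin r → _ := fun i => natTransMaps A N M hNM (natTransMaps A (p i) N (hpN i) (α i))
      with hα'
    set β' : Fin l → _ := fun j => natTransMaps A N M hNM (natTransMaps A (q j) N (hqN j) (β j))
      with hβ'
    set γ' : Fin r → Fin l → _ := fun i j =>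
      natTransMaps A N M hNM (natTransMaps A (n i j) N (hnN i j) (x i j)) with hγ'
    have hsub : ∀ i j, β' j - α' i = γ' i j := by
      intro i j
      have := congrArg (natTransMaps A (K i j) M (hKM i j)) (h0K i j)
      rw [map_zero, natTransMaps_trans] at this
      have h2 : natTransMaps A N M hNM
          ((natTransMaps A (q j) N (hqN j) (β j) - natTransMaps A (p i) N (hpN i) (α i)) -
            natTransMaps A (n i j) N (hnN i j) (x i j)) = 0 := this
      rw [map_sub, map_sub, sub_sub, sub_eq_zero] at h2
      rw [hβ', hα', hγ']
      simp only at h2 ⊢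
      rw [h2]
      abel
    have hγpos : ∀ i j v, 0 ≤ ((γ' i j v : ℝ)) := fun i j v =>
      key N M hNM _ (key (n i j) N (hnN i j) (x i j) (hx i j)) v
    have hcoord : ∀ i j v, ((α' i v : ℝ)) ≤ ((β' j v : ℝ)) := by
      intro i j v
      have h1 : ((β' j v : ℝ)) - ((α' i v : ℝ)) = ((γ' i j v : ℝ)) := by
        rw [← coe_sub, hsub]
      have := hγpos i j v
      linarith
    haveI : Fintype {v : E.V // E.level v = M} := (E.level_finite M).fintype
    set d : {v : E.V // E.level v = M} → ℝ :=
      fun v => Finset.univ.fold min 0 (fun j => ((β' j v : ℝ))) with hd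
    set F : {v : E.V // E.level v = M} → ℝ :=
      fun v => Finset.univ.fold max (d v) (fun i => ((α' i v : ℝ))) with hF
    have hFmem : ∀ v, F v ∈ AddSubgroup.closure {((w v.1 : ℝ))⁻¹, θ} := by
      intro v
      refine fold_mem_of_choice (p := fun t => t ∈ AddSubgroup.closure {((w v.1 : ℝ))⁻¹, θ})
        max_choice ?_ (fun i _ => (α' i v).2)
      exact fold_mem_of_choice min_choice
        ((AddSubgroup.closure {((w v.1 : ℝ))⁻¹, θ}).zero_mem) (fun j _ => (β' j v).2)
    set c0 : ⨁ v : {v : E.V // E.level v = M}, AddSubgroup.closure {((w v.1 : ℝ))⁻¹, θ} :=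
      DFinsupp.mk Finset.univ (fun v => ⟨F v.1, hFmem v.1⟩) with hc0
    have hc0v : ∀ v, ((c0 v : ℝ)) = F v := by
      intro v
      rw [hc0, DFinsupp.mk_apply, dif_pos (Finset.mem_univ v)]
    have haM : ∀ i, AddCommGroup.DirectLimit.of _ (natTransMaps A) M (α' i) = a i := by
      intro i
      rw [hα']
      simp only
      rw [AddCommGroup.DirectLimit.of_f, AddCommGroup.DirectLimit.of_f, ha]
    have hbM : ∀ j, AddCommGroup.DirectLimit.of _ (natTransMaps A) M (β' j) = b j := by
      intro j
      rw [hβ']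
      simp only
      rw [AddCommGroup.DirectLimit.of_f, AddCommGroup.DirectLimit.of_f, hb]
    refine ⟨AddCommGroup.DirectLimit.of _ (natTransMaps A) M c0, fun i => ?_, fun j => ?_⟩
    · refine (memP _).2 ⟨M, c0 - α' i, fun v => ?_, ?_⟩
      · rw [coe_sub, hc0v, sub_nonneg, hF]
        exact (Finset.le_fold_max _).2 (Or.inr ⟨i, Finset.mem_univ i, le_rfl⟩)
      · rw [map_sub, haM]
    · refine (memP _).2 ⟨M, β' j - c0, fun v => ?_, ?_⟩
      · rw [coe_sub, hc0v, sub_nonneg, hF]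
        refine (Finset.fold_max_le _).2 ⟨?_, fun i _ => hcoord i j v⟩
        rw [hd]
        exact (Finset.fold_min_le _).2 (Or.inr ⟨j, Finset.mem_univ j, le_rfl⟩)
      · rw [map_sub, hbM]
end
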